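/- Under the above, det J[D](x) > 0 for P_D-almost every finite configuration x in D; however, if Rank(K_D) ≤ N then the sample measure L^μ_D of the set of configurations with exactly N+1 points is positive while its P_D-measure is zero, so P_D and L^μ_D are not equivalent in general. -/

import Mathlib

open MeasureTheory ENNReal

/-- A function out of a sigma type is measurable if each fiber restriction is. -/
lemma meas_sigma_elim' {α : Type*} {β : α → Type*} [∀ a, MeasurableSpace (β a)]
    {γ : Type*} [MeasurableSpace γ] {g : Sigma β → γ}
    (h : ∀ a, Measurable fun x => g ⟨a, x⟩) : Measurable g := by
  intro s hs
  exact MeasurableSpace.measurableSet_iInf.mpr fun a => h a hs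

lemma meas_sigma_mk' {α : Type*} {β : α → Type*} [∀ a, MeasurableSpace (β a)] (a : α) :
    Measurable (@Sigma.mk α β a) := fun s hs =>
  MeasurableSpace.measurableSet_iInf.mp hs a

/-- A countable sum of measurable real functions is measurable. -/
lemma measurable_tsum_real' {α : Type*} [MeasurableSpace α] {f : ℕ → α → ℝ}
    (hf : ∀ k, Measurable (f k)) : Measurable (fun x => ∑' k, f k x) := by
  set S : Set α :=
    {x | ∃ c, Filter.Tendsto (fun n => ∑ k ∈ Finset.range n, |f k x|) Filter.atTop (nhds c)}
    with hSdef
  have hSmeas : MeasurableSet S :=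
    measurableSet_exists_tendsto fun n => Finset.measurable_sum _ fun k _ => (hf k).abs
  have hS : ∀ x, x ∈ S ↔ Summable (fun k => f k x) := by
    intro x
    constructor
    · rintro ⟨c, hc⟩
      rw [← summable_abs_iff]
      have hmono : Monotone fun n => ∑ k ∈ Finset.range n, |f k x| := by
        apply monotone_nat_of_le_succ
        intro n
        rw [Finset.sum_range_succ]
        exact le_add_of_nonneg_right (abs_nonneg _)
      exact summable_of_sum_range_le (fun _ => abs_nonneg _) fun n => hmono.ge_of_tendsto hc n
    · intro hx
      exact ⟨∑' k, |f k x|, (summable_abs_iff.mpr hx).hasSum.tendsto_sum_nat⟩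
  have heq : (fun x => ∑' k, f k x) = S.indicator (fun x => ∑' k, f k x) := by
    funext x
    by_cases hx : x ∈ S
    · rw [Set.indicator_of_mem hx]
    · rw [Set.indicator_of_notMem hx,
        tsum_eq_zero_of_not_summable (fun h => hx ((hS x).mpr h))]
  rw [heq]
  apply measurable_of_tendsto_metrizable
    (f := fun n => S.indicator fun x => ∑ k ∈ Finset.range n, f k x)
    (fun n => (Finset.measurable_sum _ fun k _ => hf k).indicator hSmeas)
  rw [tendsto_pi_nhds]
  intro x
  by_cases hx : x ∈ S
  · simp only [Set.indicator_of_mem hx]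
    exact ((hS x).mp hx).hasSum.tendsto_sum_nat
  · simp only [Set.indicator_of_notMem hx]
    exact tendsto_const_nhds

/-- With the kernel `J[D](x,y) = ∑ (lam k/(1-lam k)) φ k x φ k y` of a determinantal
process whose Janossy density is `j = Det(Id-K_D) det J[D](·)` with respect to the
sample measure `L^μ`, we have `det J[D](x) > 0` for `P_D`-a.e. configuration `x`.
However, if `Rank(K_D) ≤ N` (i.e. `lam k = 0` for `k ≥ N`) and `μ ≠ 0`, then the set of
configurations with exactly `N+1` points has `P_D`-measure zero but positive
`L^μ`-measure, so `P_D` and `L^μ` are not equivalent in general. -/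
theorem stmt7 {D : Type*} [MeasurableSpace D] (μ : Measure D) [SigmaFinite μ]
    (φ : ℕ → D → ℝ) (lam : ℕ → ℝ)
    (hφmeas : ∀ k, Measurable (φ k))
    (horth : ∀ k l, ∫ x, φ k x * φ l x ∂μ = if k = l then 1 else 0)
    (hlam0 : ∀ k, 0 ≤ lam k) (hlam1 : ∀ k, lam k < 1) (hsum : Summable lam)
    (J : D → D → ℝ)
    (hJ : ∀ x y, J x y = ∑' k, (lam k / (1 - lam k)) * φ k x * φ k y)
    (N : ℕ)
    (Lμ P : Measure (Σ n : ℕ, Fin n → D))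
    (hL : Lμ = Measure.sum fun n : ℕ =>
      ((n.factorial : ℝ≥0∞))⁻¹ • ((Measure.pi fun _ : Fin n => μ).map (Sigma.mk n)))
    (j : (Σ n : ℕ, Fin n → D) → ℝ)
    (hjdef : ∀ σ : (Σ n : ℕ, Fin n → D),
      j σ = (∏' k, (1 - lam k)) *
        Matrix.det (Matrix.of fun i i' : Fin σ.1 => J (σ.2 i) (σ.2 i')))
    (hP : P = Lμ.withDensity fun σ => ENNReal.ofReal (j σ))
    [IsProbabilityMeasure P] :
    (∀ᵐ σ ∂P, 0 < Matrix.det (Matrix.of fun i i' : Fin σ.1 => J (σ.2 i) (σ.2 i'))) ∧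
    ((∀ k, N ≤ k → lam k = 0) → μ Set.univ ≠ 0 →
      P {σ : Σ n : ℕ, Fin n → D | σ.1 = N + 1} = 0 ∧
        0 < Lμ {σ : Σ n : ℕ, Fin n → D | σ.1 = N + 1}) := by
  -- the infinite product is nonnegative
  have hc : 0 ≤ ∏' k, (1 - lam k) := by
    by_cases hm : Multipliable fun k => (1 : ℝ) - lam k
    · exact ge_of_tendsto' hm.hasProd fun s =>
        Finset.prod_nonneg fun k _ => by linarith [hlam1 k]
    · rw [tprod_eq_one_of_not_multipliable hm]; norm_num
  -- measurability of the determinant function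
  have hdetmeas : Measurable fun σ : Σ n : ℕ, Fin n → D =>
      Matrix.det (Matrix.of fun i i' : Fin σ.1 => J (σ.2 i) (σ.2 i')) := by
    apply meas_sigma_elim'
    intro n
    have hJm : ∀ i i' : Fin n, Measurable fun x : Fin n → D => J (x i) (x i') := by
      intro i i'
      have hre : (fun x : Fin n → D => J (x i) (x i')) =
          fun x => ∑' k, (lam k / (1 - lam k)) * φ k (x i) * φ k (x i') := by
        funext x; exact hJ _ _
      rw [hre]
      exact measurable_tsum_real' fun k =>
        (measurable_const.mul ((hφmeas k).comp (measurable_pi_apply i))).mul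
          ((hφmeas k).comp (measurable_pi_apply i'))
    simp only [Matrix.det_apply', Matrix.of_apply]
    exact Finset.measurable_sum (f := fun (p : Equiv.Perm (Fin n)) (x : Fin n → D) =>
        ((Equiv.Perm.sign p : ℤ) : ℝ) * ∏ i, J (x (p i)) (x i)) Finset.univ fun p _ =>
      (Finset.measurable_prod _ fun i _ => hJm (p i) i).const_mul _
  have hjmeas : Measurable fun σ : Σ n : ℕ, Fin n → D => ENNReal.ofReal (j σ) := by
    have : (fun σ : Σ n : ℕ, Fin n → D => ENNReal.ofReal (j σ)) =
        fun σ => ENNReal.ofReal ((∏' k, (1 - lam k)) *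
          Matrix.det (Matrix.of fun i i' : Fin σ.1 => J (σ.2 i) (σ.2 i'))) := by
      funext σ; rw [hjdef]
    rw [this]
    exact (hdetmeas.const_mul _).ennreal_ofReal
  constructor
  · -- a.e. positivity of the determinant under P
    rw [hP, ae_withDensity_iff hjmeas]
    refine Filter.Eventually.of_forall fun σ hσ => ?_
    have h1 : 0 < j σ := by
      rcases le_or_gt (j σ) 0 with h | h
      · exact absurd (ENNReal.ofReal_eq_zero.mpr h) hσ
      · exact h
    rw [hjdef] at h1
    by_contra hle
    push_neg at hle
    nlinarith
  · intro hrank hμ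
    -- measurability of the set of configurations with N+1 points
    have hSmeas : MeasurableSet {σ : Σ n : ℕ, Fin n → D | σ.1 = N + 1} := by
      refine MeasurableSpace.measurableSet_iInf.mpr fun n => ?_
      show MeasurableSet (Sigma.mk n ⁻¹' {σ : Σ n : ℕ, Fin n → D | σ.1 = N + 1})
      have : Sigma.mk n ⁻¹' {σ : Σ n : ℕ, Fin n → D | σ.1 = N + 1} =
          {_x : Fin n → D | n = N + 1} := rfl
      rw [this]
      exact MeasurableSet.const _
    -- the determinant vanishes on configurations with N+1 points
    have hdet0 : ∀ x : Fin (N + 1) → D,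
        Matrix.det (Matrix.of fun i i' : Fin (N + 1) => J (x i) (x i')) = 0 := by
      intro x
      set A : Matrix (Fin (N + 1)) (Fin N) ℝ :=
        Matrix.of fun i k => (lam k / (1 - lam k)) * φ k (x i) with hA
      set B : Matrix (Fin N) (Fin (N + 1)) ℝ := Matrix.of fun k i' => φ k (x i') with hB
      have hM : (Matrix.of fun i i' : Fin (N + 1) => J (x i) (x i')) = A * B := by
        ext i i'
        simp only [Matrix.of_apply, Matrix.mul_apply, hA, hB]
        rw [hJ]
        rw [tsum_eq_sum (s := Finset.range N) (by
          intro k hk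
          have hNk : N ≤ k := by simpa using hk
          rw [hrank k hNk]
          simp)]
        rw [← Fin.sum_univ_eq_sum_range (fun k => (lam k / (1 - lam k)) * φ k (x i) * φ k (x i'))]
      rw [hM]
      by_contra hne
      have hU : IsUnit (A * B) :=
        (Matrix.isUnit_iff_isUnit_det _).mpr (isUnit_iff_ne_zero.mpr hne)
      have h1 : (A * B).rank = N + 1 := by
        rw [Matrix.rank_of_isUnit _ hU, Fintype.card_fin]
      have h2 : (A * B).rank ≤ N := by
        refine le_trans (Matrix.rank_mul_le_right A B) ?_
        simpa using Matrix.rank_le_card_height B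
      omega
    constructor
    · -- P-measure zero
      rw [hP, withDensity_apply _ hSmeas]
      have : ∫⁻ σ in {σ : Σ n : ℕ, Fin n → D | σ.1 = N + 1}, ENNReal.ofReal (j σ) ∂Lμ =
          ∫⁻ _σ in {σ : Σ n : ℕ, Fin n → D | σ.1 = N + 1}, 0 ∂Lμ := by
        refine setLIntegral_congr_fun hSmeas ?_
        rintro ⟨n, x⟩ hσ
        have hn : n = N + 1 := hσ
        subst hn
        show ENNReal.ofReal (j ⟨N + 1, x⟩) = 0
        rw [hjdef]
        simp only
        rw [hdet0 x, mul_zero, ENNReal.ofReal_zero]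
      rw [this, lintegral_zero]
    · -- positive sample measure
      rw [hL, Measure.sum_apply _ hSmeas]
      have hterm : ((((N + 1).factorial : ℝ≥0∞))⁻¹ •
          ((Measure.pi fun _ : Fin (N + 1) => μ).map (Sigma.mk (N + 1))))
            {σ : Σ n : ℕ, Fin n → D | σ.1 = N + 1} ≠ 0 := by
        rw [Measure.smul_apply, Measure.map_apply (meas_sigma_mk' _) hSmeas]
        have hpre : Sigma.mk (N + 1) ⁻¹' {σ : Σ n : ℕ, Fin n → D | σ.1 = N + 1} =
            Set.univ := by
          ext x; simp
        rw [hpre, smul_eq_mul]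
        apply mul_ne_zero
        · exact ENNReal.inv_ne_zero.mpr (ENNReal.natCast_ne_top _)
        · rw [Measure.pi_univ]
          simp only [Finset.prod_const, Finset.card_univ, Fintype.card_fin]
          exact pow_ne_zero _ hμ
      calc (0 : ℝ≥0∞) < ((((N + 1).factorial : ℝ≥0∞))⁻¹ •
            ((Measure.pi fun _ : Fin (N + 1) => μ).map (Sigma.mk (N + 1))))
              {σ : Σ n : ℕ, Fin n → D | σ.1 = N + 1} := pos_iff_ne_zero.mpr hterm
        _ ≤ _ := ENNReal.le_tsum (N + 1)
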